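/- Let Λ ∈ ℝ^{d×d} be diagonal with positive entries and M symmetric positive semidefinite with M ⪰ b²·I for some b > 0. Then the solution Q of the Lyapunov equation ΛQ + QΛ = M satisfies Q ⪰ (b²/2)·Λ⁻¹. -/

import Mathlib

open Matrix MeasureTheory Set Real

lemma exp_int {c : ℝ} (hc : 0 < c) :
    ∫ t in Set.Ioi (0:ℝ), Real.exp (-(c*t)) = 1/c := by
  have h := MeasureTheory.integral_comp_mul_left_Ioi (fun x => Real.exp (-x)) 0 hc
  simp only [mul_zero, integral_exp_neg_Ioi, neg_zero, Real.exp_zero, smul_eq_mul, mul_one,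
    abs_of_pos (inv_pos.mpr hc)] at h
  rw [h, one_div]

/-- If `Λ` is diagonal with positive entries, `M ⪰ b²·I` is symmetric psd, and `Q`
solves `ΛQ + QΛ = M`, then `Q ⪰ (b²/2)·Λ⁻¹`. -/
theorem stmt_2 (d : ℕ) (lam : Fin d → ℝ) (hlam : ∀ i, 0 < lam i)
    (M Q : Matrix (Fin d) (Fin d) ℝ) (hM : M.IsSymm) (hMpsd : M.PosSemidef)
    (b : ℝ) (hb : 0 < b)
    (hMb : (M - b^2 • (1 : Matrix (Fin d) (Fin d) ℝ)).PosSemidef)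
    (hQ : Matrix.diagonal lam * Q + Q * Matrix.diagonal lam = M) :
    (Q - (b^2/2) • (Matrix.diagonal lam)⁻¹).PosSemidef := by
  set N : Matrix (Fin d) (Fin d) ℝ := M - b^2 • (1 : Matrix (Fin d) (Fin d) ℝ) with hN
  have hsum : ∀ i j, 0 < lam i + lam j := fun i j => add_pos (hlam i) (hlam j)
  have hMsym : ∀ i j, M j i = M i j := by
    intro i j
    conv_lhs => rw [← hM]
    rfl
  have hNsymm : ∀ i j, N j i = N i j := by
    intro i j
    rcases eq_or_ne i j with rfl | hij
    · rfl
    · simp only [hN, Matrix.sub_apply, Matrix.smul_apply, smul_eq_mul,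
        Matrix.one_apply_ne hij, Matrix.one_apply_ne (Ne.symm hij), hMsym]
  -- entries of Q
  have hQe : ∀ i j, Q i j = M i j / (lam i + lam j) := by
    intro i j
    have := congrFun (congrFun hQ i) j
    simp only [Matrix.add_apply, Matrix.diagonal_mul, Matrix.mul_diagonal] at this
    rw [eq_div_iff (hsum i j).ne']
    linarith [this]
  -- inverse of diagonal
  have hinv : (Matrix.diagonal lam)⁻¹ = Matrix.diagonal (fun i => (lam i)⁻¹) := by
    apply Matrix.inv_eq_right_inv
    rw [Matrix.diagonal_mul_diagonal]
    convert Matrix.diagonal_one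
    exact mul_inv_cancel₀ (hlam _).ne'
  -- entries of R
  set R := Q - (b^2/2) • (Matrix.diagonal lam)⁻¹ with hRdef
  have hRe : ∀ i j, R i j = N i j / (lam i + lam j) := by
    intro i j
    rcases eq_or_ne i j with rfl | hij
    · simp only [hRdef, Matrix.sub_apply, Matrix.smul_apply, hinv, Matrix.diagonal_apply_eq,
        smul_eq_mul, hQe, hN, Matrix.one_apply_eq]
      have h1 : lam i ≠ 0 := (hlam i).ne'
      rw [eq_div_iff (hsum i i).ne']
      have hc : lam i ^ 2 * (lam i)⁻¹ = lam i := by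
        rw [sq, mul_assoc, mul_inv_cancel₀ h1, mul_one]
      field_simp
      linear_combination
    · simp only [hRdef, Matrix.sub_apply, Matrix.smul_apply, hinv,
        Matrix.diagonal_apply_ne _ hij, smul_eq_mul, mul_zero, sub_zero, hQe, hN,
        Matrix.one_apply_ne hij, smul_eq_mul, mul_zero, sub_zero]
  refine Matrix.PosSemidef.of_dotProduct_mulVec_nonneg ?_ ?_
  · -- Hermitian
    ext i j
    simp only [Matrix.conjTranspose_apply, star_trivial, hRe, hNsymm, add_comm]
  · intro x
    set f : Fin d → Fin d → ℝ → ℝ :=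
      fun i j t => x i * N i j * x j * Real.exp (-((lam i + lam j) * t)) with hf
    have hint : ∀ (i j : Fin d),
        MeasureTheory.IntegrableOn (f i j) (Set.Ioi (0:ℝ)) := by
      intro i j
      have h0 := (exp_neg_integrableOn_Ioi 0 (hsum i j)).const_mul (x i * N i j * x j)
      simpa only [hf, neg_mul, mul_assoc, IntegrableOn] using h0
    have key : (star x) ⬝ᵥ R *ᵥ x =
        ∑ i, ∑ j, ∫ t in Set.Ioi (0:ℝ), f i j t := by
      simp only [dotProduct, Matrix.mulVec, star_trivial]
      refine Finset.sum_congr rfl fun i _ => ?_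
      rw [Finset.mul_sum]
      refine Finset.sum_congr rfl fun j _ => ?_
      simp only [hf]
      rw [MeasureTheory.integral_const_mul, exp_int (hsum i j), hRe]
      field_simp
    rw [key]
    have swap : (∑ i, ∑ j, ∫ t in Set.Ioi (0:ℝ), f i j t)
        = ∫ t in Set.Ioi (0:ℝ), ∑ i, ∑ j, f i j t := by
      rw [MeasureTheory.integral_finset_sum _ (fun i _ =>
        MeasureTheory.integrable_finset_sum _ (fun j _ => hint i j))]
      exact Finset.sum_congr rfl fun i _ =>
        (MeasureTheory.integral_finset_sum _ fun j _ => hint i j).symm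
    rw [swap]
    refine MeasureTheory.setIntegral_nonneg measurableSet_Ioi fun t _ => ?_
    set y : Fin d → ℝ := fun i => x i * Real.exp (-(lam i * t)) with hy
    have hquad : ∑ i, ∑ j, f i j t = (star y) ⬝ᵥ N *ᵥ y := by
      simp only [dotProduct, Matrix.mulVec, star_trivial, Finset.mul_sum]
      refine Finset.sum_congr rfl fun i _ => Finset.sum_congr rfl fun j _ => ?_
      simp only [hf, hy]
      rw [show Real.exp (-((lam i + lam j)*t)) =
        Real.exp (-(lam i * t)) * Real.exp (-(lam j * t)) by rw [← Real.exp_add]; ring_nf]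
      ring
    rw [hquad]
    exact hMb.dotProduct_mulVec_nonneg y
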